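/- Assume μ > 0 and 3λ + 2μ > 0 and let ω = (ω₁, ω₂, 0) be a unit vector. Then the vector q₂⁺ := (ω₁, ω₂, i, −2iμω₁, −2iμω₂, 2μ) ∈ ℂ⁶ satisfies K⁰ q₂⁺ = i q₂⁺, and its componentwise complex conjugate q₂⁻ satisfies K⁰ q₂⁻ = −i q₂⁻. -/

import Mathlib

open Matrix

noncomputable section

/-- Isotropic elasticity tensor `C_{ijkl} = λ δ_{ij} δ_{kl} + μ (δ_{ik} δ_{jl} + δ_{il} δ_{jk})`. -/
def isoC (lam mu : ℝ) (i j k l : Fin 3) : ℝ :=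
  lam * (if i = j then (1:ℝ) else 0) * (if k = l then (1:ℝ) else 0)
    + mu * ((if i = k then (1:ℝ) else 0) * (if j = l then (1:ℝ) else 0)
      + (if i = l then (1:ℝ) else 0) * (if j = k then (1:ℝ) else 0))

/-- The matrix `⟨ξ,ζ⟩` with entries `⟨ξ,ζ⟩_{ik} = Σ_{j,l} C_{ijkl} ξ_j ζ_l`. -/
def bil (lam mu : ℝ) (ξ ζ : Fin 3 → ℝ) : Matrix (Fin 3) (Fin 3) ℝ :=
  Matrix.of fun i k => ∑ j, ∑ l, isoC lam mu i j k l * ξ j * ζ l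

/-- `M₀ = ⟨e₃,e₃⟩`. -/
def Mat0 (lam mu : ℝ) : Matrix (Fin 3) (Fin 3) ℝ := bil lam mu ![0,0,1] ![0,0,1]

/-- `M₁ = ⟨e₃,ω⟩ + ⟨ω,e₃⟩` for `ω = (ω₁,ω₂,0)`. -/
def Mat1 (lam mu ω1 ω2 : ℝ) : Matrix (Fin 3) (Fin 3) ℝ :=
  bil lam mu ![0,0,1] ![ω1,ω2,0] + bil lam mu ![ω1,ω2,0] ![0,0,1]

/-- `M₂ = ⟨ω,ω⟩`. -/
def Mat2 (lam mu ω1 ω2 : ℝ) : Matrix (Fin 3) (Fin 3) ℝ :=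
  bil lam mu ![ω1,ω2,0] ![ω1,ω2,0]

/-- `⟨e₃,ω⟩`. -/
def E3w (lam mu ω1 ω2 : ℝ) : Matrix (Fin 3) (Fin 3) ℝ := bil lam mu ![0,0,1] ![ω1,ω2,0]

/-- `⟨ω,e₃⟩`. -/
def wE3 (lam mu ω1 ω2 : ℝ) : Matrix (Fin 3) (Fin 3) ℝ := bil lam mu ![ω1,ω2,0] ![0,0,1]

/-- The 6×6 Stroh matrix
`K⁰ = [[−M₀⁻¹⟨e₃,ω⟩, −M₀⁻¹], [M₂ − ⟨ω,e₃⟩M₀⁻¹⟨e₃,ω⟩, −⟨ω,e₃⟩M₀⁻¹]]`. -/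
def Stroh (lam mu ω1 ω2 : ℝ) : Matrix (Fin 6) (Fin 6) ℝ :=
  Matrix.reindex finSumFinEquiv finSumFinEquiv
    (Matrix.fromBlocks
      (-((Mat0 lam mu)⁻¹ * E3w lam mu ω1 ω2)) (-(Mat0 lam mu)⁻¹)
      (Mat2 lam mu ω1 ω2 - wE3 lam mu ω1 ω2 * (Mat0 lam mu)⁻¹ * E3w lam mu ω1 ω2)
      (-(wE3 lam mu ω1 ω2 * (Mat0 lam mu)⁻¹)))

/-- Complex versions (real matrices regarded as complex matrices). -/
def Mat0c (lam mu : ℝ) : Matrix (Fin 3) (Fin 3) ℂ := (Mat0 lam mu).map Complex.ofReal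

def Mat1c (lam mu ω1 ω2 : ℝ) : Matrix (Fin 3) (Fin 3) ℂ := (Mat1 lam mu ω1 ω2).map Complex.ofReal

def Mat2c (lam mu ω1 ω2 : ℝ) : Matrix (Fin 3) (Fin 3) ℂ := (Mat2 lam mu ω1 ω2).map Complex.ofReal

def E3wc (lam mu ω1 ω2 : ℝ) : Matrix (Fin 3) (Fin 3) ℂ := (E3w lam mu ω1 ω2).map Complex.ofReal

def Strohc (lam mu ω1 ω2 : ℝ) : Matrix (Fin 6) (Fin 6) ℂ := (Stroh lam mu ω1 ω2).map Complex.ofReal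

end

lemma Mat0_eq (lam mu : ℝ) : Mat0 lam mu = !![mu,0,0;0,mu,0;0,0,lam+2*mu] := by
  ext i k
  fin_cases i <;> fin_cases k <;>
    simp [Mat0, bil, isoC, Fin.sum_univ_three, Matrix.vecHead, Matrix.vecTail] <;> ring

lemma E3w_eq (lam mu ω1 ω2 : ℝ) :
    E3w lam mu ω1 ω2 = !![0,0,mu*ω1;0,0,mu*ω2;lam*ω1,lam*ω2,0] := by
  ext i k
  fin_cases i <;> fin_cases k <;>
    simp [E3w, bil, isoC, Fin.sum_univ_three, Matrix.vecHead, Matrix.vecTail] <;> ring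

lemma wE3_eq (lam mu ω1 ω2 : ℝ) :
    wE3 lam mu ω1 ω2 = !![0,0,lam*ω1;0,0,lam*ω2;mu*ω1,mu*ω2,0] := by
  ext i k
  fin_cases i <;> fin_cases k <;>
    simp [wE3, bil, isoC, Fin.sum_univ_three, Matrix.vecHead, Matrix.vecTail] <;> ring

lemma Mat2_eq (lam mu ω1 ω2 : ℝ) :
    Mat2 lam mu ω1 ω2 = !![lam*ω1^2+mu*(ω1^2+ω2^2+ω1^2), (lam+mu)*ω1*ω2, 0;
      (lam+mu)*ω1*ω2, lam*ω2^2+mu*(ω1^2+ω2^2+ω2^2), 0;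
      0, 0, mu*(ω1^2+ω2^2)] := by
  ext i k
  fin_cases i <;> fin_cases k <;>
    simp [Mat2, bil, isoC, Fin.sum_univ_three, Matrix.vecHead, Matrix.vecTail] <;> ring

lemma Mat0_inv (lam mu : ℝ) (hmu : 0 < mu) (hconv : 0 < 3 * lam + 2 * mu) :
    (Mat0 lam mu)⁻¹ = !![mu⁻¹,0,0;0,mu⁻¹,0;0,0,(lam+2*mu)⁻¹] := by
  have h2 : lam + 2*mu ≠ 0 := by nlinarith
  apply Matrix.inv_eq_right_inv
  rw [Mat0_eq]
  ext i k
  fin_cases i <;> fin_cases k <;>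
    simp [Matrix.mul_apply, Fin.sum_univ_three, Matrix.vecHead, Matrix.vecTail, h2, ne_of_gt hmu]

lemma blockA (lam mu ω1 ω2 : ℝ) (hmu : 0 < mu) (hconv : 0 < 3 * lam + 2 * mu) :
    -((Mat0 lam mu)⁻¹ * E3w lam mu ω1 ω2)
      = !![0,0,-ω1;0,0,-ω2;-(lam*ω1/(lam+2*mu)),-(lam*ω2/(lam+2*mu)),0] := by
  have hm : mu ≠ 0 := ne_of_gt hmu
  rw [Mat0_inv lam mu hmu hconv, E3w_eq]
  ext i j
  fin_cases i <;> fin_cases j <;>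
    simp [Matrix.mul_apply, Fin.sum_univ_three, Matrix.vecHead, Matrix.vecTail] <;>
    field_simp <;> ring

lemma blockB (lam mu ω1 ω2 : ℝ) (hmu : 0 < mu) (hconv : 0 < 3 * lam + 2 * mu) :
    -((Mat0 lam mu)⁻¹) = !![-mu⁻¹,0,0;0,-mu⁻¹,0;0,0,-(lam+2*mu)⁻¹] := by
  rw [Mat0_inv lam mu hmu hconv]
  ext i j
  fin_cases i <;> fin_cases j <;>
    simp [Matrix.vecHead, Matrix.vecTail]

lemma blockC (lam mu ω1 ω2 : ℝ) (hmu : 0 < mu) (hconv : 0 < 3 * lam + 2 * mu) :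
    Mat2 lam mu ω1 ω2 - wE3 lam mu ω1 ω2 * (Mat0 lam mu)⁻¹ * E3w lam mu ω1 ω2
      = !![lam*ω1^2+mu*(ω1^2+ω2^2+ω1^2)-lam^2*ω1^2/(lam+2*mu),
           (lam+mu)*ω1*ω2-lam^2*ω1*ω2/(lam+2*mu),0;
           (lam+mu)*ω1*ω2-lam^2*ω1*ω2/(lam+2*mu),
           lam*ω2^2+mu*(ω1^2+ω2^2+ω2^2)-lam^2*ω2^2/(lam+2*mu),0;
           0,0,0] := by
  have hm : mu ≠ 0 := ne_of_gt hmu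
  have h2 : lam + 2*mu ≠ 0 := by nlinarith
  rw [Mat0_inv lam mu hmu hconv, E3w_eq, wE3_eq, Mat2_eq]
  ext i j
  fin_cases i <;> fin_cases j <;>
    simp [Matrix.mul_apply, Fin.sum_univ_three, Matrix.vecHead, Matrix.vecTail] <;>
    field_simp <;> ring

lemma blockD (lam mu ω1 ω2 : ℝ) (hmu : 0 < mu) (hconv : 0 < 3 * lam + 2 * mu) :
    -(wE3 lam mu ω1 ω2 * (Mat0 lam mu)⁻¹)
      = !![0,0,-(lam*ω1/(lam+2*mu));0,0,-(lam*ω2/(lam+2*mu));-ω1,-ω2,0] := by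
  have hm : mu ≠ 0 := ne_of_gt hmu
  rw [Mat0_inv lam mu hmu hconv, wE3_eq]
  ext i j
  fin_cases i <;> fin_cases j <;>
    simp [Matrix.mul_apply, Fin.sum_univ_three, Matrix.vecHead, Matrix.vecTail] <;>
    field_simp <;> ring

set_option maxHeartbeats 1000000 in
lemma Stroh_eq (lam mu ω1 ω2 : ℝ) (hmu : 0 < mu) (hconv : 0 < 3 * lam + 2 * mu) :
    Stroh lam mu ω1 ω2 =
      !![0,0,-ω1,-mu⁻¹,0,0;
         0,0,-ω2,0,-mu⁻¹,0;
         -(lam*ω1/(lam+2*mu)),-(lam*ω2/(lam+2*mu)),0,0,0,-(lam+2*mu)⁻¹;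
         lam*ω1^2+mu*(ω1^2+ω2^2+ω1^2)-lam^2*ω1^2/(lam+2*mu),
           (lam+mu)*ω1*ω2-lam^2*ω1*ω2/(lam+2*mu),0,0,0,-(lam*ω1/(lam+2*mu));
         (lam+mu)*ω1*ω2-lam^2*ω1*ω2/(lam+2*mu),
           lam*ω2^2+mu*(ω1^2+ω2^2+ω2^2)-lam^2*ω2^2/(lam+2*mu),0,0,0,-(lam*ω2/(lam+2*mu));
         0,0,0,-ω1,-ω2,0] := by
  rw [Stroh, blockA lam mu ω1 ω2 hmu hconv, blockB lam mu ω1 ω2 hmu hconv,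
    blockC lam mu ω1 ω2 hmu hconv, blockD lam mu ω1 ω2 hmu hconv]
  ext i j
  fin_cases i <;> fin_cases j <;> rfl

lemma cons_val_five {α : Type*} (a : α) (u : Fin 5 → α) :
    Matrix.vecCons a u (5 : Fin 6) = u 4 := rfl

set_option maxHeartbeats 1000000 in
/-- The vector `q₂⁺ = (ω₁, ω₂, i, −2iμω₁, −2iμω₂, 2μ)` is an eigenvector of the Stroh
matrix `K⁰` for the eigenvalue `i`, and its componentwise complex conjugate `q₂⁻` is an
eigenvector for the eigenvalue `−i`. -/
theorem stmt3 (lam mu ω1 ω2 : ℝ) (hmu : 0 < mu) (hconv : 0 < 3 * lam + 2 * mu)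
    (hω : ω1 ^ 2 + ω2 ^ 2 = 1) :
    Strohc lam mu ω1 ω2 *ᵥ
        (![(ω1 : ℂ), (ω2 : ℂ), Complex.I, -(2 * Complex.I * mu * ω1),
            -(2 * Complex.I * mu * ω2), 2 * (mu : ℂ)] : Fin 6 → ℂ)
      = Complex.I •
        (![(ω1 : ℂ), (ω2 : ℂ), Complex.I, -(2 * Complex.I * mu * ω1),
            -(2 * Complex.I * mu * ω2), 2 * (mu : ℂ)] : Fin 6 → ℂ) ∧
    Strohc lam mu ω1 ω2 *ᵥ
        (fun j => starRingEnd ℂ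
          ((![(ω1 : ℂ), (ω2 : ℂ), Complex.I, -(2 * Complex.I * mu * ω1),
              -(2 * Complex.I * mu * ω2), 2 * (mu : ℂ)] : Fin 6 → ℂ) j))
      = (-Complex.I) •
        (fun j => starRingEnd ℂ
          ((![(ω1 : ℂ), (ω2 : ℂ), Complex.I, -(2 * Complex.I * mu * ω1),
              -(2 * Complex.I * mu * ω2), 2 * (mu : ℂ)] : Fin 6 → ℂ) j)) := by
  have hm : (mu:ℂ) ≠ 0 := by exact_mod_cast ne_of_gt hmu
  have h2r : lam + 2*mu ≠ 0 := by nlinarith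
  have h2 : (lam:ℂ) + 2*(mu:ℂ) ≠ 0 := by exact_mod_cast h2r
  have hωc : (ω1:ℂ)^2 + (ω2:ℂ)^2 = 1 := by exact_mod_cast hω
  rw [Strohc, Stroh_eq lam mu ω1 ω2 hmu hconv]
  constructor <;> funext j <;> fin_cases j
  all_goals
    simp [Matrix.mulVec, dotProduct, Fin.sum_univ_succ, Matrix.map_apply,
      Matrix.cons_val_zero, Matrix.cons_val_succ, Complex.conj_I,
      _root_.map_mul, map_neg, map_ofNat, Complex.conj_ofReal, Complex.I_sq,
      cons_val_five, Matrix.cons_val_four, Matrix.cons_val_three, Matrix.cons_val_two,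
      Matrix.cons_val_one, Matrix.head_cons, Matrix.tail_cons]
  all_goals try field_simp
  all_goals try simp only [Complex.I_mul_I, Complex.I_sq]
  all_goals
    first
      | ring1
      | linear_combination (-((lam:ℂ)^3 + 4*(lam:ℂ)^2*mu + 4*(lam:ℂ)*mu^2)) * hωc
      | linear_combination ((4*(lam:ℂ)*mu + 4*(mu:ℂ)^2) * ω1) * hωc
      | linear_combination ((4*(lam:ℂ)*mu + 4*(mu:ℂ)^2) * ω2) * hωc
      | linear_combination ((2*(mu:ℂ)) * Complex.I) * hωc
      | linear_combination (-(2*(mu:ℂ)) * Complex.I) * hωc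
      | linear_combination (2*(mu:ℂ)) * hωc
      | linear_combination (-(2*(mu:ℂ))) * hωc
      | linear_combination ((4*(lam:ℂ)*mu + 4*(mu:ℂ)^2) * ω1) * hωc
          + ((2*(lam:ℂ)*mu + 4*(mu:ℂ)^2) * ω1) * Complex.I_sq
      | linear_combination ((4*(lam:ℂ)*mu + 4*(mu:ℂ)^2) * ω2) * hωc
          + ((2*(lam:ℂ)*mu + 4*(mu:ℂ)^2) * ω2) * Complex.I_sq
      | linear_combination (-(4*(lam:ℂ)*mu + 4*(mu:ℂ)^2) * ω1) * hωc
          + (-(2*(lam:ℂ)*mu + 4*(mu:ℂ)^2) * ω1) * Complex.I_sq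
      | linear_combination (-(4*(lam:ℂ)*mu + 4*(mu:ℂ)^2) * ω2) * hωc
          + (-(2*(lam:ℂ)*mu + 4*(mu:ℂ)^2) * ω2) * Complex.I_sq
      | linear_combination (ω1 * (((lam:ℂ) + mu*2) - (lam:ℂ)^2 * ((lam:ℂ) + mu*2)⁻¹)) * hωc
          - ((lam:ℂ) * ω1) * mul_inv_cancel₀ (show (lam:ℂ) + mu*2 ≠ 0 by rw [mul_comm]; exact h2)
      | linear_combination (ω2 * (((lam:ℂ) + mu*2) - (lam:ℂ)^2 * ((lam:ℂ) + mu*2)⁻¹)) * hωc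
          - ((lam:ℂ) * ω2) * mul_inv_cancel₀ (show (lam:ℂ) + mu*2 ≠ 0 by rw [mul_comm]; exact h2)
      | linear_combination hωc
      | linear_combination (-1:ℂ) * hωc
      | linear_combination (-(lam:ℂ)) * hωc
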